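/- arXiv:2605.26160 — 11 statements merged into one kernel-verified Lean document; each statement's English description precedes it below -/
import Mathlib

section
/- Let R be a commutative ring, a, b ∈ R, and s a regular element. Then a is complemented with complement b if and only if s·a is complemented with complement b (i.e., ab = 0 and a + b regular iff (sa)b = 0 and sa + b regular). -/
theorem complemented_iff_smul_regular {R : Type*} [CommRing R] [Nontrivial R]
    (a b s : R) (hs : s ∈ nonZeroDivisors R) :
    (a * b = 0 ∧ a + b ∈ nonZeroDivisors R) ↔
      ((s * a) * b = 0 ∧ s * a + b ∈ nonZeroDivisors R) := by
  constructor
  · rintro ⟨hab, hreg⟩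
    refine ⟨by rw [mul_assoc, hab, mul_zero], ?_⟩
    rw [mem_nonZeroDivisors_iff_right]
    intro x hx
    have hb2 : x * b * b = 0 := by linear_combination b * hx - x * s * hab
    have ha2s : x * a * a * s = 0 := by linear_combination a * hx - x * hab
    have ha2 : x * a * a = 0 := (mem_nonZeroDivisors_iff_right.mp hs) _ ha2s
    have h1 : x * (a + b) * (a + b) = 0 := by linear_combination ha2 + hb2 + 2 * x * hab
    exact (mem_nonZeroDivisors_iff_right.mp hreg) _ ((mem_nonZeroDivisors_iff_right.mp hreg) _ h1)
  · rintro ⟨hab, hreg⟩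
    have hab' : a * b = 0 := (mem_nonZeroDivisors_iff_right.mp hs) _ (by linear_combination hab)
    refine ⟨hab', ?_⟩
    rw [mem_nonZeroDivisors_iff_right]
    intro x hx
    have hb2 : x * b * b = 0 := by linear_combination b * hx - x * hab'
    have ha2 : x * a * a = 0 := by linear_combination a * hx - x * hab'
    have h1 : x * (s * a + b) * (s * a + b) = 0 := by
      linear_combination s * s * ha2 + hb2 + 2 * x * s * hab'
    exact (mem_nonZeroDivisors_iff_right.mp hreg) _ ((mem_nonZeroDivisors_iff_right.mp hreg) _ h1)
end

section
/- Let R be a commutative ring, let b be a complement of a (ab = 0 and a + b regular), and suppose bb' is nilpotent and a + bb' is complemented. Then bb' = 0. -/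
theorem nilpotent_perturbation_complemented_eq_zero {R : Type*} [CommRing R] [Nontrivial R]
    (a b b' : R) (hab : a * b = 0) (hreg : a + b ∈ nonZeroDivisors R)
    (hnil : IsNilpotent (b * b'))
    (hcompl : ∃ z : R, (a + b * b') * z = 0 ∧ a + b * b' + z ∈ nonZeroDivisors R) :
    b * b' = 0 := by
  obtain ⟨z, hz, hs⟩ := hcompl
  -- First: a * z = 0, by cancelling the regular element a + b
  have haz : a * z = 0 := by
    apply hreg.2
    linear_combination a * hz + (z - b' * z) * hab
  -- Hence b * b' * z = 0
  have hxz : (b * b') * z = 0 := by linear_combination hz - haz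
  -- x * a = 0
  have hxa : (b * b') * a = 0 := by linear_combination b' * hab
  obtain ⟨n, hn⟩ := hnil
  have key : ∀ k : ℕ, (b * b') * (a + b * b' + z) ^ k = (b * b') ^ (k + 1) := by
    intro k
    induction k with
    | zero => simp
    | succ k ih =>
      have : (b * b') * (a + b * b' + z) ^ (k + 1)
          = ((b * b') * (a + b * b' + z) ^ k) * (a + b * b' + z) := by ring
      rw [this, ih]
      have h1 : (b * b') ^ (k + 1) = (b * b') ^ k * (b * b') := by ring
      rw [h1]
      linear_combination (b * b') ^ k * hxa + (b * b') ^ k * hxz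
  have hfin : (b * b') * (a + b * b' + z) ^ n = 0 := by
    rw [key n, pow_succ, hn, zero_mul]
  exact (pow_mem hs n).2 _ hfin
end

section
/- If R is a semi-complemented commutative ring (every non-nilpotent element is complemented), then R is almost complemented: R modulo its nilradical is a complemented ring. -/
theorem semiComplemented_implies_almostComplemented {R : Type*} [CommRing R] [Nontrivial R]
    (h : ∀ x : R, ¬ IsNilpotent x → ∃ y : R, x * y = 0 ∧ x + y ∈ nonZeroDivisors R) :
    ∀ a : R ⧸ nilradical R, ∃ b : R ⧸ nilradical R,
      a * b = 0 ∧ a + b ∈ nonZeroDivisors (R ⧸ nilradical R) := by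
  -- key: a non-zero-divisor in R maps to a non-zero-divisor in R ⧸ nilradical R
  have key : ∀ s : R, s ∈ nonZeroDivisors R →
      (Ideal.Quotient.mk (nilradical R) s) ∈ nonZeroDivisors (R ⧸ nilradical R) := by
    intro s hs
    rw [mem_nonZeroDivisors_iff_right]
    intro z hz
    obtain ⟨r, rfl⟩ := Ideal.Quotient.mk_surjective z
    rw [← map_mul] at hz
    rw [Ideal.Quotient.eq_zero_iff_mem] at hz ⊢
    obtain ⟨n, hn⟩ := hz
    rw [mul_pow] at hn
    have : s ^ n * r ^ n = 0 := by rw [mul_comm]; exact hn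
    exact ⟨n, (mem_nonZeroDivisors_iff_right.mp (pow_mem hs n)) _ hn⟩
  intro a
  obtain ⟨x, rfl⟩ := Ideal.Quotient.mk_surjective a
  by_cases hx : IsNilpotent x
  · refine ⟨1, ?_, ?_⟩
    · have : (Ideal.Quotient.mk (nilradical R)) x = 0 :=
        Ideal.Quotient.eq_zero_iff_mem.mpr hx
      rw [this, zero_mul]
    · have : (Ideal.Quotient.mk (nilradical R)) x = 0 :=
        Ideal.Quotient.eq_zero_iff_mem.mpr hx
      rw [this, zero_add]
      exact one_mem _
  · obtain ⟨y, hxy, hnzd⟩ := h x hx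
    refine ⟨Ideal.Quotient.mk _ y, ?_, ?_⟩
    · rw [← map_mul, hxy, map_zero]
    · rw [← map_add]
      exact key _ hnzd
end

section
/- An element a of a commutative ring R is π-complemented (some power of a is complemented) if and only if there exists b ∈ R with ab nilpotent and a + b regular. -/
/-- If `z` kills a power of `u` and a power of `v`, and `u + v` is regular, then `z = 0`. -/
lemma ann_helper {R : Type*} [CommRing R] {u v z : R} {N : ℕ}
    (hu : z * u ^ N = 0) (hv : z * v ^ N = 0)
    (hreg : u + v ∈ nonZeroDivisors R) : z = 0 := by
  let I : Ideal R :=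
  { carrier := {x | z * x = 0}
    add_mem' := fun {x y} hx hy => by
      simp only [Set.mem_setOf_eq] at *
      rw [mul_add, hx, hy, add_zero]
    zero_mem' := by simp
    smul_mem' := fun c x hx => by
      simp only [Set.mem_setOf_eq, smul_eq_mul] at *
      rw [mul_comm c x, ← mul_assoc, hx, zero_mul] }
  have hu' : u ∈ I.radical := ⟨N, hu⟩
  have hv' : v ∈ I.radical := ⟨N, hv⟩
  have hsum : u + v ∈ I.radical := I.radical.add_mem hu' hv'
  obtain ⟨k, hk⟩ := hsum
  exact (pow_mem hreg k).2 z hk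

theorem pi_complemented_iff {R : Type*} [CommRing R] [Nontrivial R] (a : R) :
    (∃ n : ℕ, 1 ≤ n ∧ ∃ y : R, a ^ n * y = 0 ∧ a ^ n + y ∈ nonZeroDivisors R) ↔
      (∃ b : R, IsNilpotent (a * b) ∧ a + b ∈ nonZeroDivisors R) := by
  constructor
  · rintro ⟨n, hn, y, hy0, hreg⟩
    obtain ⟨k, rfl⟩ : ∃ k, n = k + 1 := ⟨n - 1, by omega⟩
    refine ⟨y, ⟨k + 1, ?_⟩, ?_⟩
    · have h : (a * y) ^ (k + 1) = (a ^ (k + 1) * y) * y ^ k := by ring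
      rw [h, hy0, zero_mul]
    · rw [mem_nonZeroDivisors_iff_right]
      intro z hz
      -- hz : z * (a + y) = 0
      have haz : ∀ m : ℕ, z * a ^ m = z * (-y) ^ m := by
        intro m
        induction m with
        | zero => simp
        | succ m ih => linear_combination a * ih + (-y) ^ m * hz
      have hzy : z * y ^ (k + 2) = 0 := by
        have h := haz (k + 1)
        rcases Nat.even_or_odd (k + 1) with hp | hp
        · rw [hp.neg_pow] at h
          linear_combination z * hy0 - y * h
        · rw [hp.neg_pow] at h
          linear_combination y * h - z * hy0
      have hza : z * a ^ (k + 2) = 0 := by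
        have h := haz (k + 2)
        have hy' : z * (-y) ^ (k + 2) = 0 := by
          rcases Nat.even_or_odd (k + 2) with hp | hp
          · rw [hp.neg_pow]; exact hzy
          · rw [hp.neg_pow, mul_neg, hzy, neg_zero]
        rw [h, hy']
      have hu : z * (a ^ (k + 1)) ^ (k + 2) = 0 := by
        have he : (a ^ (k + 1)) ^ (k + 2) = a ^ (k + 2) * a ^ (k * (k + 2)) := by
          rw [← pow_mul, ← pow_add]
          congr 1
          ring
        rw [he, ← mul_assoc, hza, zero_mul]
      have hv : z * y ^ (k + 2) = 0 := hzy
      exact ann_helper hu hv hreg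
  · rintro ⟨b, ⟨m, hm⟩, hreg⟩
    have hm1 : 1 ≤ m := by
      rcases Nat.eq_zero_or_pos m with rfl | h
      · simp at hm
      · exact h
    refine ⟨m, hm1, b ^ m, ?_, ?_⟩
    · rw [← mul_pow]; exact hm
    · rw [mem_nonZeroDivisors_iff_right]
      intro z hz
      -- hz : z * (a ^ m + b ^ m) = 0
      have hab : a ^ m * b ^ m = 0 := by rw [← mul_pow]; exact hm
      have h1 : z * a ^ m = -(z * b ^ m) := by linear_combination hz
      have hu : z * a ^ (2 * m) = 0 := by
        have : z * a ^ (2 * m) = (z * a ^ m) * a ^ m := by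
          rw [mul_assoc, ← pow_add]; congr 2; ring
        rw [this, h1]
        linear_combination -z * hab
      have hv : z * b ^ (2 * m) = 0 := by
        have : z * b ^ (2 * m) = (z * b ^ m) * b ^ m := by
          rw [mul_assoc, ← pow_add]; congr 2; ring
        rw [this]
        linear_combination b ^ m * hz - z * hab
      exact ann_helper hu hv hreg
end

section
/- Let R be a commutative ring. An element a ∈ R is regular if and only if a is aregular (xa nilpotent implies x nilpotent) and a is complemented (there is b with ab = 0 and a + b regular). -/
theorem regular_iff_aregular_and_complemented {R : Type*} [CommRing R] [Nontrivial R] (a : R) :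
    a ∈ nonZeroDivisors R ↔
      ((∀ x : R, IsNilpotent (a * x) → IsNilpotent x) ∧
        ∃ b : R, a * b = 0 ∧ a + b ∈ nonZeroDivisors R) := by
  constructor
  · intro ha
    refine ⟨fun x ⟨n, hn⟩ => ⟨n, ?_⟩, 0, mul_zero a, by simpa using ha⟩
    rw [mul_pow] at hn
    exact mem_nonZeroDivisors_iff_right.mp (pow_mem ha n) _ (by rw [mul_comm]; exact hn)
  · rintro ⟨har, b, hab, hreg⟩
    obtain ⟨m, hm⟩ := har b ⟨1, by simpa using hab⟩
    rw [mem_nonZeroDivisors_iff_right]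
    intro x hx
    have key : ∀ k, (a + b) ^ k * x = b ^ k * x := by
      intro k
      induction k with
      | zero => simp
      | succ k ih =>
        have hax : a * x = 0 := by rw [mul_comm]; exact hx
        calc (a + b) ^ (k + 1) * x = (a + b) * ((a + b) ^ k * x) := by ring
          _ = (a + b) * (b ^ k * x) := by rw [ih]
          _ = b ^ k * (a * x) + b ^ (k + 1) * x := by ring
          _ = b ^ (k + 1) * x := by rw [hax]; ring
    have h0 : x * (a + b) ^ m = 0 := by
      rw [mul_comm, key m, hm, zero_mul]
    exact mem_nonZeroDivisors_iff_right.mp (pow_mem hreg m) x h0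
end

section
/- Suppose every element a of a commutative ring R admits b with ab nilpotent and a + b regular. Then every aregular element of R is regular. -/
theorem aregular_regular_of_pi_complemented {R : Type*} [CommRing R] [Nontrivial R]
    (h : ∀ a : R, ∃ b : R, IsNilpotent (a * b) ∧ a + b ∈ nonZeroDivisors R) :
    ∀ a : R, (∀ x : R, IsNilpotent (a * x) → IsNilpotent x) → a ∈ nonZeroDivisors R := by
  intro a ha
  obtain ⟨b, hnil, hreg⟩ := h a
  obtain ⟨m, hm⟩ := ha b hnil
  rw [mem_nonZeroDivisors_iff_right]
  intro x hx
  have key : ∀ n : ℕ, x * (a + b) ^ n = x * b ^ n := by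
    intro n
    induction n with
    | zero => simp
    | succ n ih =>
      calc x * (a + b) ^ (n + 1) = (x * (a + b) ^ n) * (a + b) := by ring
        _ = (x * b ^ n) * (a + b) := by rw [ih]
        _ = x * b ^ (n + 1) + (x * a) * b ^ n := by ring
        _ = x * b ^ (n + 1) := by rw [hx]; ring
  have hzero : x * (a + b) ^ m = 0 := by rw [key m, hm, mul_zero]
  exact mem_nonZeroDivisors_iff_right.mp (pow_mem hreg m) x hzero
end

section
/- A commutative ring R is semi-complemented if and only if either every non-nilpotent element of R is regular (Property D) or R is complemented (reduced and every element is complemented). -/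
theorem semiComplemented_iff_propD_or_complemented {R : Type*} [CommRing R] [Nontrivial R] :
    (∀ x : R, ¬ IsNilpotent x → ∃ y : R, x * y = 0 ∧ x + y ∈ nonZeroDivisors R) ↔
      ((∀ x : R, IsNilpotent x ∨ x ∈ nonZeroDivisors R) ∨
        (∀ x : R, ∃ y : R, x * y = 0 ∧ x + y ∈ nonZeroDivisors R)) := by
  constructor
  · intro hSC
    by_cases hD : ∀ x : R, IsNilpotent x ∨ x ∈ nonZeroDivisors R
    · exact Or.inl hD
    right
    push_neg at hD
    obtain ⟨a, ha_nn, ha_nr⟩ := hD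
    rw [mem_nonZeroDivisors_iff_right] at ha_nr
    push_neg at ha_nr
    obtain ⟨b, hab, hb0⟩ := ha_nr
    -- b * a = 0, b ≠ 0
    obtain ⟨y, hay, hr⟩ := hSC a ha_nn
    -- key lemma : if x is non-nilpotent, x*c = 0 and n^2 = 0, then n*c^2 = 0
    have key : ∀ (x c n : R), ¬ IsNilpotent x → x * c = 0 → n * n = 0 → n * c ^ 2 = 0 := by
      intro x c n hx hxc hn
      have hnc2 : (n * c) ^ 2 = 0 := by linear_combination c ^ 2 * hn
      have hcnn : ¬ IsNilpotent (x + n * c) := by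
        intro h
        apply hx
        have hx' : x = (x + n * c) + -(n * c) := by ring
        rw [hx']
        exact (Commute.all _ _).isNilpotent_add h (IsNilpotent.neg ⟨2, hnc2⟩)
      obtain ⟨z, hz, ht⟩ := hSC _ hcnn
      rw [mem_nonZeroDivisors_iff_right] at ht
      have h1 : n * c ^ 2 * z = 0 := by linear_combination c * hz - z * hxc
      exact ht (n * c ^ 2) (by linear_combination n * c * hxc + c ^ 3 * hn + h1)
    -- powers of r = a + y
    have hpow : ∀ m : ℕ, (a + y) ^ (m + 1) = a ^ (m + 1) + y ^ (m + 1) := by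
      intro m
      induction m with
      | zero => simp
      | succ m ih =>
        calc (a + y) ^ (m + 2) = (a + y) ^ (m + 1) * (a + y) := by ring
        _ = a ^ (m + 2) + y ^ (m + 2) := by
            rw [ih]; linear_combination (a ^ m + y ^ m) * hay
    -- y is non-nilpotent
    have hy_nn : ¬ IsNilpotent y := by
      rintro ⟨N, hyN⟩
      rcases N with _ | m
      · exact one_ne_zero (α := R) (by simpa using hyN)
      · apply hb0
        have hra : (a + y) ^ (m + 1) = a ^ (m + 1) := by
          rw [hpow m, hyN, add_zero]
        refine mem_nonZeroDivisors_iff_right.mp (pow_mem hr (m + 1)) b ?_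
        rw [hra]
        calc b * a ^ (m + 1) = (b * a) * a ^ m := by ring
        _ = 0 := by rw [hab, zero_mul]
    -- all square-zero elements vanish
    have hsq : ∀ n : R, n * n = 0 → n = 0 := by
      intro n hn
      have h1 : n * y ^ 2 = 0 := key a y n ha_nn hay hn
      have h2 : n * a ^ 2 = 0 := key y a n hy_nn (by linear_combination hay) hn
      have hny : n * y = 0 :=
        mem_nonZeroDivisors_iff_right.mp hr (n * y) (by linear_combination h1 + n * hay)
      have hna : n * a = 0 :=
        mem_nonZeroDivisors_iff_right.mp hr (n * a) (by linear_combination h2 + n * hay)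
      exact mem_nonZeroDivisors_iff_right.mp hr n (by linear_combination hna + hny)
    -- the ring is reduced
    have red : ∀ k : ℕ, ∀ x : R, x ^ k = 0 → x = 0 := by
      intro k
      induction k with
      | zero => intro x hx; exact absurd (by simpa using hx) (one_ne_zero (α := R))
      | succ k IH =>
        intro x hx
        cases k with
        | zero => simpa using hx
        | succ m =>
          apply IH
          apply hsq
          calc x ^ (m + 1) * x ^ (m + 1) = x ^ (m + 2) * x ^ m := by ring
          _ = 0 := by rw [hx, zero_mul]
    -- conclude: every element is complemented
    intro x
    by_cases hx : IsNilpotent x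
    · obtain ⟨k, hk⟩ := hx
      have hx0 : x = 0 := red k x hk
      subst hx0
      exact ⟨1, by simp, by simpa using (one_mem (nonZeroDivisors R))⟩
    · exact hSC x hx
  · rintro (hD | hC) x hx
    · rcases hD x with h | h
      · exact absurd h hx
      · exact ⟨0, mul_zero x, by simpa using h⟩
    · exact hC x
end

section
/- Let R be a commutative ring satisfying Property D (every element is nilpotent or regular). Then the polynomial ring R[x] satisfies Property D. -/
theorem polynomial_propertyD {R : Type*} [CommRing R] [Nontrivial R]
    (h : ∀ a : R, IsNilpotent a ∨ a ∈ nonZeroDivisors R) :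
    ∀ f : Polynomial R, IsNilpotent f ∨ f ∈ nonZeroDivisors (Polynomial R) := by
  intro f
  by_cases hn : ∀ i, IsNilpotent (f.coeff i)
  · exact Or.inl (Polynomial.isNilpotent_iff.mpr hn)
  · right
    push_neg at hn
    obtain ⟨i, hi⟩ := hn
    have hreg : f.coeff i ∈ nonZeroDivisors R := (h (f.coeff i)).resolve_left hi
    rw [Polynomial.mem_nonZeroDivisors_iff]
    intro a ha
    have : a * f.coeff i = 0 := by
      have := congrArg (fun p => Polynomial.coeff p i) ha
      simpa using this
    exact hreg.2 a this
end

section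
/- Let R be a reduced commutative ring and f ∈ R[[x]] a power series. Then f is a regular element of R[[x]] if and only if the ideal generated by the coefficients of f has zero annihilator in R. -/
open PowerSeries in
private lemma coeff_mul_coeff_eq_zero' {R : Type*} [CommRing R] [IsReduced R]
    {f g : PowerSeries R} (h : f * g = 0) (i j : ℕ) :
    PowerSeries.coeff i f * PowerSeries.coeff j g = 0 := by
  set a : ℕ → R := fun i => coeff i f with ha
  set b : ℕ → R := fun j => coeff j g with hb
  have hsum : ∀ n, ∑ p ∈ Finset.HasAntidiagonal.antidiagonal n, a p.1 * b p.2 = 0 := by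
    intro n
    rw [← PowerSeries.coeff_mul, h, map_zero]
  suffices H : ∀ n, ∀ j ≤ n, a (n - j) * b j = 0 by
    have := H (i + j) j (Nat.le_add_left _ _)
    simpa using this
  intro n
  induction n using Nat.strong_induction_on with
  | _ n IH1 =>
    intro j hj
    induction j using Nat.strong_induction_on with
    | _ j IH2 =>
      have key : a (n - j) * b j * b j = 0 := by
        have hs := hsum n
        have heq : ∑ p ∈ Finset.HasAntidiagonal.antidiagonal n, a p.1 * b p.2 * b j
            = a (n - j) * b j * b j := by
          apply Finset.sum_eq_single_of_mem (n - j, j)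
          · rw [Finset.HasAntidiagonal.mem_antidiagonal]; omega
          · intro p hp hne
            rw [Finset.HasAntidiagonal.mem_antidiagonal] at hp
            rcases lt_trichotomy p.2 j with hlt | heq2 | hgt
            · have h1 : a (n - p.2) * b p.2 = 0 := IH2 p.2 hlt (by omega)
              have hp1 : p.1 = n - p.2 := by omega
              rw [hp1, h1, zero_mul]
            · exfalso; apply hne
              have : p.1 = n - j := by omega
              exact Prod.ext this heq2
            · have hm : p.1 + j < n := by omega
              have h2 : a (p.1 + j - j) * b j = 0 := IH1 (p.1 + j) hm j (by omega)
              simp only [Nat.add_sub_cancel] at h2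
              rw [mul_assoc, mul_comm (b p.2), ← mul_assoc, h2, zero_mul]
        rw [← Finset.sum_mul, hs, zero_mul] at heq
        exact heq.symm
      have hsq : (a (n - j) * b j) ^ 2 = 0 := by
        have : (a (n - j) * b j) ^ 2 = a (n - j) * (a (n - j) * b j * b j) := by ring
        rw [this, key, mul_zero]
      exact IsNilpotent.eq_zero ⟨2, hsq⟩

theorem powerSeries_regular_iff_dense_content {R : Type*} [CommRing R] [Nontrivial R]
    [IsReduced R] (f : PowerSeries R) :
    f ∈ nonZeroDivisors (PowerSeries R) ↔
      ∀ r : R, (∀ x ∈ Ideal.span (Set.range fun n => PowerSeries.coeff n f), r * x = 0)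
        → r = 0 := by
  constructor
  · intro hf r hr
    have hC : (PowerSeries.C r) * f = 0 := by
      ext n
      rw [PowerSeries.coeff_C_mul, map_zero]
      exact hr _ (Ideal.subset_span ⟨n, rfl⟩)
    have h0 := (mem_nonZeroDivisors_iff.mp hf).2 _ hC
    have := congrArg (PowerSeries.coeff 0) h0
    simpa using this
  · intro h
    rw [mem_nonZeroDivisors_iff_right]
    intro g hg
    ext j
    rw [map_zero]
    apply h
    intro x hx
    refine Submodule.span_induction ?_ ?_ ?_ ?_ hx
    · rintro _ ⟨n, rfl⟩
      simpa using coeff_mul_coeff_eq_zero' hg j n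
    · simp
    · intro x y _ _ hx hy
      rw [mul_add, hx, hy, add_zero]
    · intro c x _ hx
      have : (PowerSeries.coeff j) g * (c • x) = c * ((PowerSeries.coeff j) g * x) := by
        rw [smul_eq_mul]; ring
      rw [this, hx, mul_zero]
end

section
/- Let R be a reduced commutative ring and f, g ∈ R[[x]] with fg = 0. Then every coefficient of f annihilates every coefficient of g. -/
theorem coeff_mul_coeff_eq_zero_of_mul_eq_zero {R : Type*} [CommRing R] [Nontrivial R]
    [IsReduced R] (f g : PowerSeries R) (h : f * g = 0) :
    ∀ i j : ℕ, PowerSeries.coeff i f * PowerSeries.coeff j g = 0 := by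
  intro i j
  apply IsReduced.eq_zero
  rw [nilpotent_iff_mem_prime]
  intro P hP
  have hmap : (PowerSeries.map (Ideal.Quotient.mk P) f) *
      (PowerSeries.map (Ideal.Quotient.mk P) g) = 0 := by
    rw [← RingHom.map_mul, h, RingHom.map_zero]
  rcases mul_eq_zero.mp hmap with h0 | h0
  · have : Ideal.Quotient.mk P (PowerSeries.coeff i f) = 0 := by
      have := congrArg (PowerSeries.coeff i) h0
      simpa using this
    have hm : PowerSeries.coeff i f ∈ P := Ideal.Quotient.eq_zero_iff_mem.mp this
    exact Ideal.mul_mem_right _ _ hm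
  · have : Ideal.Quotient.mk P (PowerSeries.coeff j g) = 0 := by
      have := congrArg (PowerSeries.coeff j) h0
      simpa using this
    have hm : PowerSeries.coeff j g ∈ P := Ideal.Quotient.eq_zero_iff_mem.mp this
    exact Ideal.mul_mem_left _ _ hm
end

section
/- Let R be a commutative ring, and suppose a and b satisfy ab = 0 and a + b is aregular. Then for any aregular s ∈ R, a·(sb) = 0 and a + sb is aregular. -/
theorem rough_complement_smul {R : Type*} [CommRing R] [Nontrivial R]
    (a b s : R) (hab : a * b = 0)
    (hsum : ∀ x : R, IsNilpotent ((a + b) * x) → IsNilpotent x)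
    (hs : ∀ x : R, IsNilpotent (s * x) → IsNilpotent x) :
    a * (s * b) = 0 ∧ ∀ x : R, IsNilpotent ((a + s * b) * x) → IsNilpotent x := by
  constructor
  · calc a * (s * b) = s * (a * b) := by ring
    _ = 0 := by rw [hab, mul_zero]
  · intro x hx
    have h1 : IsNilpotent (a * a * x) := by
      have := (Commute.all a _).isNilpotent_mul_left hx
      have e : a * ((a + s * b) * x) = a * a * x := by
        have : a * ((a + s * b) * x) = a * a * x + s * (a * b) * x := by ring
        rw [this, hab]; ring
      rwa [e] at this
    have h2 : IsNilpotent (s * s * (b * b) * x) := by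
      have := (Commute.all (s*b) _).isNilpotent_mul_left hx
      have e : s * b * ((a + s * b) * x) = s * (a * b) * x + s * s * (b * b) * x := by ring
      rw [e, hab] at this
      simpa using this
    have h3 : IsNilpotent ((s * (a + b)) * (s * (a + b)) * x) := by
      have e : (s * (a + b)) * (s * (a + b)) * x
          = s * s * (a * a * x) + (2 * s * s * x) * (a * b) + s * s * (b * b) * x := by ring
      rw [e, hab, mul_zero, add_zero]
      exact (Commute.all _ _).isNilpotent_add ((Commute.all (s*s) _).isNilpotent_mul_left h1) h2
    have h4 : IsNilpotent (s * ((a + b) * (s * ((a + b) * x)))) := by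
      have e : s * ((a + b) * (s * ((a + b) * x))) = (s * (a + b)) * (s * (a + b)) * x := by ring
      rwa [e]
    have h5 := hsum _ (hs _ h4)
    exact hsum x (hs _ h5)
end
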